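/- The volume function V(b₁,b₂) = 8/((3 + 3b₂ − b₁)(3 − b₂ + b₁)(3 − b₁ − b₂)) for C³/Z₄ attains its minimum on its positivity domain at (b₁, b₂) = (−1, 0) with minimum value 1/4. -/

import Mathlib

/-- The volume function of `ℂ³/ℤ₄` (with `b₃ = 3`) attains its minimum `1/4` on
its positivity domain exactly at `(b₁, b₂) = (−1, 0)`. -/
theorem volume_min_C3Z4 (b₁ b₂ : ℝ)
    (h₁ : 0 < 3 + 3 * b₂ - b₁) (h₂ : 0 < b₁ - b₂ + 3) (h₃ : 0 < 3 - b₁ - b₂) :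
    (1 : ℝ) / 4 ≤ 8 / ((3 + 3 * b₂ - b₁) * (b₁ - b₂ + 3) * (3 - b₁ - b₂)) ∧
      (8 / ((3 + 3 * b₂ - b₁) * (b₁ - b₂ + 3) * (3 - b₁ - b₂)) = 1 / 4 ↔
        b₁ = -1 ∧ b₂ = 0) := by
  have hP : 0 < (3 + 3 * b₂ - b₁) * (b₁ - b₂ + 3) * (3 - b₁ - b₂) :=
    mul_pos (mul_pos h₁ h₂) h₃
  have hle : (3 + 3 * b₂ - b₁) * (b₁ - b₂ + 3) * (3 - b₁ - b₂) ≤ 32 := by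
    nlinarith [sq_nonneg (b₁ + 1), sq_nonneg b₂, sq_nonneg (b₁ + 1 + b₂),
      sq_nonneg (b₁ + 1 - b₂), sq_nonneg (b₁ + 1 + 2*b₂), mul_pos h₁ h₂,
      mul_pos h₂ h₃, mul_pos h₁ h₃]
  constructor
  · rw [div_le_div_iff₀ (by norm_num) hP]
    linarith
  · constructor
    · intro h
      have hPeq : (3 + 3 * b₂ - b₁) * (b₁ - b₂ + 3) * (3 - b₁ - b₂) = 32 := by
        field_simp at h
        rw [div_eq_iff (by linarith)] at h
        linarith
      have key : (b₁ + 1) ^ 2 + b₂ ^ 2 ≤ 0 := by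
        nlinarith [mul_nonneg h₃.le (sq_nonneg (b₁ + 1 - b₂)),
          mul_nonneg h₂.le (sq_nonneg (b₁ + 1 + b₂)),
          mul_nonneg h₁.le (sq_nonneg (b₁ + 1)),
          mul_nonneg h₁.le (sq_nonneg b₂),
          mul_nonneg h₂.le (sq_nonneg (b₁ + 1 - b₂)),
          mul_nonneg h₃.le (sq_nonneg (b₁ + 1 + b₂)),
          mul_pos h₁ h₂, mul_pos h₂ h₃, mul_pos h₁ h₃,
          sq_nonneg (b₁ + 1), sq_nonneg b₂]
      constructor
      · nlinarith [sq_nonneg (b₁ + 1), sq_nonneg b₂]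
      · nlinarith [sq_nonneg (b₁ + 1), sq_nonneg b₂]
    · rintro ⟨rfl, rfl⟩
      norm_num
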